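/- A WNM-algebra I with more than two elements is simple if and only if I has a coatom u and its operations satisfy: x ⊙ y = 0 whenever x, y < 1, x ⊙ 1 = x; and x → y = 1 if x ≤ y, 1 → y = y, and x → y = u whenever y < x < 1. -/

import Mathlib

class ResLat (A : Type*) extends Lattice A, CommMonoid A where
  rbot : A
  himp : A → A → A
  rbot_le : ∀ a : A, rbot ≤ a
  le_one : ∀ a : A, a ≤ 1
  resid : ∀ a b c : A, a * b ≤ c ↔ a ≤ himp b c

namespace ResLat

variable {A : Type*} [ResLat A]

def rneg (a : A) : A := himp a rbot

def Nilpotent (a : A) : Prop := ∃ n : ℕ, 1 ≤ n ∧ a ^ n = rbot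

def Unity (a : A) : Prop := ∀ n : ℕ, 1 ≤ n → Nilpotent (rneg (a ^ n))

def ImpFilter (F : Set A) : Prop :=
  (1 : A) ∈ F ∧ ∀ x y : A, x ∈ F → himp x y ∈ F → y ∈ F

def MaxImpFilter (F : Set A) : Prop :=
  ImpFilter F ∧ F ≠ Set.univ ∧
    ∀ G : Set A, ImpFilter G → F ⊆ G → G = F ∨ G = Set.univ

def Rad (A : Type*) [ResLat A] : Set A :=
  { x | ∀ F : Set A, MaxImpFilter F → x ∈ F }

def Ds (A : Type*) [ResLat A] : Set A := { x | rneg x = rbot }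

def Simple (A : Type*) [ResLat A] : Prop :=
  Nontrivial A ∧ ∀ F : Set A, ImpFilter F → F = {1} ∨ F = Set.univ

def IsHom {B : Type*} [ResLat B] (f : A → B) : Prop :=
  (∀ x y : A, f (x * y) = f x * f y) ∧
  (∀ x y : A, f (himp x y) = himp (f x) (f y)) ∧
  (∀ x y : A, f (x ⊓ y) = f x ⊓ f y) ∧
  (∀ x y : A, f (x ⊔ y) = f x ⊔ f y) ∧
  f rbot = rbot ∧ f 1 = 1

end ResLat

open ResLat

namespace ResLatAux

open ResLat

variable {A : Type*} [ResLat A]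

lemma himp_mul_le (a b : A) : himp a b * a ≤ b := (resid _ _ _).mpr le_rfl

lemma mul_le_mul_right' {a b : A} (h : a ≤ b) (c : A) : a * c ≤ b * c := by
  have hb : b ≤ himp c (b * c) := (resid b c (b * c)).1 le_rfl
  exact (resid a c (b * c)).2 (h.trans hb)

lemma mul_le_mul'' {a b c d : A} (h1 : a ≤ b) (h2 : c ≤ d) : a * c ≤ b * d := by
  calc a * c ≤ b * c := mul_le_mul_right' h1 c
    _ = c * b := mul_comm _ _
    _ ≤ d * b := mul_le_mul_right' h2 b
    _ = b * d := mul_comm _ _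

lemma mul_le_left (a b : A) : a * b ≤ a := by
  have := mul_le_mul'' (le_refl a) (le_one b)
  rwa [mul_one] at this

lemma himp_eq_one_iff {a b : A} : himp a b = 1 ↔ a ≤ b := by
  constructor
  · intro h
    have := himp_mul_le a b
    rwa [h, one_mul] at this
  · intro h
    refine le_antisymm (le_one _) ?_
    exact (resid 1 a b).1 (by rwa [one_mul])

lemma himp_one_left (b : A) : himp 1 b = b := by
  refine le_antisymm ?_ ?_
  · have := himp_mul_le 1 b
    rwa [mul_one] at this
  · exact (resid b 1 b).1 (by rw [mul_one])

lemma mul_sup (a b c : A) : a * (b ⊔ c) = a * b ⊔ a * c := by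
  refine le_antisymm ?_ (sup_le (mul_le_mul'' le_rfl le_sup_left) (mul_le_mul'' le_rfl le_sup_right))
  rw [mul_comm]
  refine (resid _ _ _).2 (sup_le ?_ ?_)
  · exact (resid _ _ _).1 (by rw [mul_comm]; exact le_sup_left)
  · exact (resid _ _ _).1 (by rw [mul_comm]; exact le_sup_right)

lemma sup_pow_one {a b : A} (h : a ⊔ b = 1) : ∀ n : ℕ, a ⊔ b ^ n = 1 := by
  intro n
  induction n with
  | zero => simpa using sup_eq_right.2 (le_one a)
  | succ n ih =>
    refine le_antisymm (le_one _) ?_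
    have key : (a ⊔ b ^ n) * (a ⊔ b) ≤ a ⊔ b ^ (n + 1) := by
      rw [mul_sup]
      refine sup_le ?_ ?_
      · refine le_sup_left.trans' ?_
        have h2 := mul_le_mul'' (le_one (a ⊔ b ^ n)) (le_refl a)
        rwa [one_mul] at h2
      · rw [mul_comm, mul_sup]
        refine sup_le (le_sup_left.trans' ?_) (le_sup_right.trans' ?_)
        · rw [mul_comm]; exact mul_le_left a b
        · rw [mul_comm b (b ^ n), ← pow_succ]
    calc (1 : A) = (a ⊔ b ^ n) * (a ⊔ b) := by rw [ih, h, one_mul]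
      _ ≤ a ⊔ b ^ (n + 1) := key

/-- In a simple algebra, every non-unit is nilpotent (some power is rbot). -/
lemma simple_nilp (hs : Simple A) {a : A} (ha : a ≠ 1) : ∃ n : ℕ, a ^ n = rbot := by
  set F : Set A := {x | ∃ n : ℕ, a ^ n ≤ x} with hFdef
  have hF : ImpFilter F := by
    constructor
    · exact ⟨0, by simp⟩
    · rintro x y ⟨n, hn⟩ ⟨m, hm⟩
      refine ⟨m + n, ?_⟩
      rw [pow_add]
      calc a ^ m * a ^ n ≤ himp x y * x := mul_le_mul'' hm hn
        _ ≤ y := himp_mul_le x y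
  rcases hs.2 F hF with h1 | huniv
  · exfalso
    have : a ∈ F := ⟨1, by rw [pow_one]⟩
    rw [h1] at this
    exact ha this
  · have : rbot ∈ F := by rw [huniv]; trivial
    obtain ⟨n, hn⟩ := this
    exact ⟨n, le_antisymm hn (rbot_le _)⟩

end ResLatAux

open ResLatAux
theorem stmt15 {A : Type*} [ResLat A]
    (hpl : ∀ x y : A, himp x y ⊔ himp y x = 1)
    (hwnm : ∀ x y : A, rneg (x * y) ⊔ himp (x ⊓ y) (x * y) = 1)
    (hcard : ∃ a b c : A, a ≠ b ∧ a ≠ c ∧ b ≠ c) :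
    Simple A ↔
      ∃ u : A, (u < 1 ∧ ∀ x : A, u < x → x = 1) ∧
        (∀ x y : A, x < 1 → y < 1 → x * y = rbot) ∧
        (∀ x : A, x * 1 = x) ∧
        (∀ x y : A, x ≤ y → himp x y = 1) ∧
        (∀ y : A, himp 1 y = y) ∧
        (∀ x y : A, y < x → x < 1 → himp x y = u) := by
  constructor
  · intro hs
    -- Step C: squares of non-units are rbot
    have hsq : ∀ x : A, x < 1 → x * x = rbot := by
      intro x hx
      have hw := hwnm x x
      rw [inf_idem] at hw
      by_cases hb : himp x (x * x) = 1
      · -- x is idempotent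
        have hidem : x * x = x := le_antisymm (mul_le_left x x) (himp_eq_one_iff.1 hb)
        have hle : ∀ n : ℕ, x ≤ x ^ n := by
          intro n
          induction n with
          | zero => simpa using le_one x
          | succ n ih =>
            rw [pow_succ]
            calc x = x * x := hidem.symm
              _ ≤ x ^ n * x := ResLatAux.mul_le_mul_right' ih x
        obtain ⟨n, hn⟩ := simple_nilp hs (ne_of_lt hx)
        have hxbot : x = rbot := le_antisymm (hn ▸ hle n) (rbot_le x)
        rw [hidem, hxbot]
      · obtain ⟨m, hm⟩ := simple_nilp hs hb
        have h2 := sup_pow_one hw m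
        rw [hm, sup_eq_left.2 (rbot_le _)] at h2
        have : x * x ≤ rbot := himp_eq_one_iff.1 h2
        exact le_antisymm this (rbot_le _)
    -- Step D: 1 is join-irreducible
    have hji : ∀ x y : A, x < 1 → y < 1 → x ⊔ y < 1 := by
      intro x y hx hy
      refine lt_of_le_of_ne (le_one _) ?_
      intro h
      obtain ⟨m, hm⟩ := simple_nilp hs (ne_of_lt hy)
      have h2 := sup_pow_one h m
      rw [hm, sup_eq_left.2 (rbot_le _)] at h2
      exact (ne_of_lt hx) h2
    -- Step E: products of non-units are rbot
    have hprod : ∀ x y : A, x < 1 → y < 1 → x * y = rbot := by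
      intro x y hx hy
      have h1 : x * y ≤ (x ⊔ y) * (x ⊔ y) := ResLatAux.mul_le_mul'' le_sup_left le_sup_right
      rw [hsq _ (hji x y hx hy)] at h1
      exact le_antisymm h1 (rbot_le _)
    -- Step F: find an element strictly between rbot and 1
    obtain ⟨d, hd0, hd1⟩ : ∃ d : A, d ≠ rbot ∧ d ≠ 1 := by
      obtain ⟨a, b, c, hab, hac, hbc⟩ := hcard
      by_cases ha0 : a = rbot
      · by_cases hb1 : b = 1
        · refine ⟨c, ?_, ?_⟩
          · rw [← ha0]; exact fun h => hac h.symm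
          · rw [← hb1]; exact fun h => hbc h.symm
        · by_cases hb0 : b = rbot
          · exact absurd (ha0.trans hb0.symm) hab
          · exact ⟨b, hb0, hb1⟩
      · by_cases ha1 : a = 1
        · by_cases hb0 : b = rbot
          · refine ⟨c, ?_, ?_⟩
            · rw [← hb0]; exact fun h => hbc h.symm
            · rw [← ha1]; exact fun h => hac h.symm
          · by_cases hb1 : b = 1
            · exact absurd (ha1.trans hb1.symm) hab
            · exact ⟨b, hb0, hb1⟩
        · exact ⟨a, ha0, ha1⟩
    have hd0' : rbot < d := lt_of_le_of_ne (rbot_le d) (Ne.symm hd0)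
    have hd1' : d < 1 := lt_of_le_of_ne (le_one d) hd1
    -- the coatom
    set u : A := himp d rbot with hu
    have hub : ∀ z : A, z < 1 → z ≤ u := by
      intro z hz
      exact (resid z d rbot).1 (le_of_eq (hprod z d hz hd1'))
    have hu1 : u < 1 := by
      refine lt_of_le_of_ne (le_one _) ?_
      intro h
      have : d ≤ rbot := himp_eq_one_iff.1 h
      exact hd0 (le_antisymm this (rbot_le d))
    refine ⟨u, ⟨hu1, ?_⟩, hprod, fun x => mul_one x, fun x y h => himp_eq_one_iff.2 h,
      ResLatAux.himp_one_left, ?_⟩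
    · intro x hx
      by_contra hx1
      exact absurd (hub x (lt_of_le_of_ne (le_one x) hx1)) (LT.lt.not_ge hx)
    · intro x y hyx hx1
      refine le_antisymm ?_ ?_
      · refine hub _ (lt_of_le_of_ne (le_one _) ?_)
        intro h
        exact absurd (himp_eq_one_iff.1 h) (LT.lt.not_ge hyx)
      · exact (resid u x y).1 ((hprod u x hu1 hx1).le.trans (rbot_le y))
  · rintro ⟨u, ⟨hu1, _⟩, hprod, _, himple, _, himpu⟩
    refine ⟨⟨u, 1, ne_of_lt hu1⟩, ?_⟩
    intro F hF
    by_cases hall : ∀ x ∈ F, x = 1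
    · left
      ext x
      simp only [Set.mem_singleton_iff]
      exact ⟨fun hx => hall x hx, fun hx => hx ▸ hF.1⟩
    · right
      push_neg at hall
      obtain ⟨a, haF, ha1⟩ := hall
      have halt : a < 1 := lt_of_le_of_ne (le_one a) ha1
      have up : ∀ x y : A, x ∈ F → x ≤ y → y ∈ F := by
        intro x y hx hxy
        exact hF.2 x y hx (by rw [himple x y hxy]; exact hF.1)
      have hau : a ≤ u := by
        by_cases ha0 : a = rbot
        · rw [ha0]; exact rbot_le u
        · have h1 : himp a rbot = u :=
            himpu a rbot (lt_of_le_of_ne (rbot_le a) (Ne.symm ha0)) halt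
          rw [← h1]
          exact (resid a a rbot).1 (le_of_eq (hprod a a halt halt))
      have huF : u ∈ F := up a u haF hau
      have hbotF : rbot ∈ F := by
        by_cases hu0 : u = rbot
        · rw [← hu0]; exact huF
        · have h1 : himp u rbot = u :=
            himpu u rbot (lt_of_le_of_ne (rbot_le u) (Ne.symm hu0)) hu1
          exact hF.2 u rbot huF (by rw [h1]; exact huF)
      exact Set.eq_univ_of_forall fun z => up rbot z hbotF (rbot_le z)
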